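/- Let k ≥ 1, a₁,…,a_k ∈ ℝ and p = ∏ aᵢ. Let s ∈ ℝ with s ≠ 0, let θ ∈ ℝ, and let R ∈ ℝ satisfy R² = ∏_{i=1}^{k}(aᵢ² − s²). Then the point x = R cos θ / s, y = (p − R sin θ)/s², z = −s² satisfies −z x² + (z y + p)² = ∏_{i=1}^{k}(z + aᵢ²). Hence (R, θ) are coordinates parametrizing the real points of the D-type surface lying over z = −s². -/

import Mathlib

/-- The `(R, θ)` parametrization of the real points of the D-type surface over
`z = −s²`: the point `x = R cos θ / s`, `y = (p − R sin θ)/s²`, `z = −s²` with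
`R² = ∏ᵢ(aᵢ² − s²)` satisfies `−z x² + (z y + p)² = ∏ᵢ(z + aᵢ²)`. -/
theorem d_surface_real_parametrization (k : ℕ) (hk : 1 ≤ k) (a : Fin k → ℝ)
    (p : ℝ) (hp : p = ∏ i, a i)
    (s θ R : ℝ) (hs : s ≠ 0)
    (hR : R ^ 2 = ∏ i, (a i ^ 2 - s ^ 2))
    (x y z : ℝ)
    (hx : x = R * Real.cos θ / s)
    (hy : y = (p - R * Real.sin θ) / s ^ 2)
    (hz : z = -s ^ 2) :
    -z * x ^ 2 + (z * y + p) ^ 2 = ∏ i, (z + a i ^ 2) := by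
  subst hx hy hz
  have hprod : ∏ i, (-s ^ 2 + a i ^ 2) = ∏ i, (a i ^ 2 - s ^ 2) :=
    Finset.prod_congr rfl (fun i _ => by ring)
  rw [hprod, ← hR]
  have hc := Real.sin_sq_add_cos_sq θ
  field_simp
  linear_combination R ^ 2 * hc
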